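/- Suppose each branch's choice function C^b satisfies IRC and substitutability and agents have strict preferences over their own contracts plus an outside option. Then the outcome of the cumulative offer process is independent of the order in which agents are chosen to propose. -/
import Mathlib

open Finset
variable {I B X : Type*} [DecidableEq I] [DecidableEq B] [DecidableEq X] [Fintype X]

/-- Contracts currently held by the branches: from the cumulative offer set `A`,
each branch holds its choice from the offers addressed to it. -/
noncomputable def held (br : X → B) (C : B → Finset X → Finset X) (A : Finset X) : Finset X :=
  A.filter (fun x => x ∈ C (br x) (A.filter (fun y => br y = br x)))

/-- Agent `i` has no currently held contract. -/
noncomputable def FreeAgent (ag : X → I) (br : X → B) (C : B → Finset X → Finset X)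
    (A : Finset X) (i : I) : Prop :=
  ∀ x ∈ held br C A, ag x ≠ i

/-- Contract `x` is a valid next proposal at cumulative offer set `A`: its agent is
free, `x` is acceptable, not yet proposed, and most preferred among the agent's
acceptable not-yet-proposed contracts (`none` is the outside option; higher
`P`-value = more preferred). -/
noncomputable def Proposable (ag : X → I) (br : X → B) (C : B → Finset X → Finset X)
    (P : I → Option X → ℕ) (A : Finset X) (x : X) : Prop :=
  x ∉ A ∧ P (ag x) none < P (ag x) (some x) ∧ FreeAgent ag br C A (ag x) ∧
    ∀ y : X, ag y = ag x → y ∉ A → P (ag y) none < P (ag y) (some y) →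
      P (ag x) (some y) ≤ P (ag x) (some x)

/-- A policy resolving the arbitrary choice of proposer: it returns a valid proposal
whenever one exists, and `none` exactly when no agent can propose. -/
noncomputable def ValidPolicy (ag : X → I) (br : X → B) (C : B → Finset X → Finset X)
    (P : I → Option X → ℕ) (pol : Finset X → Option X) : Prop :=
  ∀ A : Finset X, (∀ x, pol A = some x → Proposable ag br C P A x) ∧
    (pol A = none → ∀ x, ¬ Proposable ag br C P A x)

/-- The cumulative offer process: starting from offer set `A`, repeatedly add the
proposal chosen by the policy (fuel-indexed; `Fintype.card X + 1` steps suffice). -/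
noncomputable def cop (pol : Finset X → Option X) : ℕ → Finset X → Finset X
  | 0, A => A
  | n + 1, A =>
    match pol A with
    | none => A
    | some x => cop pol n (insert x A)

/-- The outcome of the cumulative offer process. -/
noncomputable def outcome (br : X → B) (C : B → Finset X → Finset X)
    (pol : Finset X → Option X) : Finset X :=
  held br C (cop pol (Fintype.card X + 1) ∅)

/-- Irrelevance of rejected contracts. -/
def IRCb (Cb : Finset X → Finset X) : Prop :=
  ∀ (Y : Finset X) (z : X), z ∉ Y → z ∉ Cb (insert z Y) → Cb Y = Cb (insert z Y)

/-- Substitutability. -/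
def Substb (Cb : Finset X → Finset X) : Prop :=
  ∀ (Y : Finset X) (z z' : X), z ∉ Cb (insert z Y) → z ∉ Cb (insert z' (insert z Y))

/-- Law of aggregate demand. -/
def LADb (Cb : Finset X → Finset X) : Prop :=
  ∀ Y Y' : Finset X, Y ⊆ Y' → (Cb Y).card ≤ (Cb Y').card


/-- Once rejected, always rejected (from substitutability). -/
lemma rejMono {Cb : Finset X → Finset X} (hs : Substb Cb) :
    ∀ T S : Finset X, ∀ x, x ∈ S → S ⊆ T → x ∉ Cb S → x ∉ Cb T := by
  intro T
  induction T using Finset.strongInduction with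
  | _ T ih =>
    intro S x hxS hST hrej
    by_cases h : T ⊆ S
    · have hTS : S = T := Finset.Subset.antisymm hST h
      rwa [← hTS]
    · obtain ⟨z, hzT, hzS⟩ := Finset.not_subset.mp h
      have hsub : S ⊆ T.erase z := fun a ha =>
        Finset.mem_erase.mpr ⟨fun e => hzS (e ▸ ha), hST ha⟩
      have h1 : x ∉ Cb (T.erase z) :=
        ih (T.erase z) (Finset.erase_ssubset hzT) S x hxS hsub hrej
      have hxT' : x ∈ T.erase z := hsub hxS
      have e1 : insert x ((T.erase z).erase x) = T.erase z := Finset.insert_erase hxT'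
      have h2 := hs ((T.erase z).erase x) x z (by rwa [e1])
      rw [e1, Finset.insert_erase hzT] at h2
      exact h2

/-- Each agent has at most one proposable contract at a time. -/
lemma prop_unique {ag : X → I} {br : X → B} {C : B → Finset X → Finset X}
    {P : I → Option X → ℕ} (hP : ∀ i, Function.Injective (P i)) {A : Finset X} {x y : X}
    (hx : Proposable ag br C P A x) (hy : Proposable ag br C P A y)
    (h : ag x = ag y) : x = y := by
  obtain ⟨hxA, hxacc, _, hxmax⟩ := hx
  obtain ⟨hyA, hyacc, _, hymax⟩ := hy
  have h1 : P (ag x) (some y) ≤ P (ag x) (some x) := hxmax y h.symm hyA hyacc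
  have h2 : P (ag y) (some x) ≤ P (ag y) (some y) := hymax x h hxA hxacc
  rw [h] at h1
  have : P (ag y) (some x) = P (ag y) (some y) := le_antisymm h2 h1
  exact Option.some_injective X (hP (ag y) this)

/-- A proposable contract remains proposable after a different proposal is made. -/
lemma prop_step {ag : X → I} {br : X → B} {C : B → Finset X → Finset X}
    {P : I → Option X → ℕ} (hsub : ∀ b, Substb (C b))
    (hP : ∀ i, Function.Injective (P i)) {A : Finset X} {x y : X}
    (hx : Proposable ag br C P A x) (hy : Proposable ag br C P A y) (hxy : x ≠ y) :
    Proposable ag br C P (insert x A) y := by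
  have hagne : ag x ≠ ag y := fun h => hxy (prop_unique hP hx hy h)
  obtain ⟨hyA, hyacc, hyfree, hymax⟩ := hy
  refine ⟨?_, hyacc, ?_, ?_⟩
  · intro h
    rcases Finset.mem_insert.mp h with h | h
    · exact hxy h.symm
    · exact hyA h
  · intro z hz heq
    have hz' := Finset.mem_filter.mp hz
    rcases Finset.mem_insert.mp hz'.1 with hzx | hzA
    · exact hagne (hzx ▸ heq)
    · by_cases hc : z ∈ C (br z) (A.filter (fun u => br u = br z))
      · exact hyfree z (Finset.mem_filter.mpr ⟨hzA, hc⟩) heq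
      · have hmem : z ∈ A.filter (fun u => br u = br z) :=
          Finset.mem_filter.mpr ⟨hzA, rfl⟩
        have hss : A.filter (fun u => br u = br z) ⊆
            (insert x A).filter (fun u => br u = br z) :=
          Finset.filter_subset_filter _ (Finset.subset_insert x A)
        exact rejMono (hsub (br z)) _ _ z hmem hss hc hz'.2
  · intro z hzag hz hzacc
    exact hymax z hzag (fun h => hz (Finset.mem_insert_of_mem h)) hzacc

lemma cop_succ_none {pol : Finset X → Option X} {A : Finset X} {n : ℕ}
    (h : pol A = none) : cop pol (n + 1) A = A := by
  simp [cop, h]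

lemma cop_succ_some {pol : Finset X → Option X} {A : Finset X} {n : ℕ} {x : X}
    (h : pol A = some x) : cop pol (n + 1) A = cop pol n (insert x A) := by
  simp [cop, h]

/-- If no contract is proposable, the process stays put. -/
lemma cop_stay {ag : X → I} {br : X → B} {C : B → Finset X → Finset X}
    {P : I → Option X → ℕ} {pol : Finset X → Option X}
    (hv : ValidPolicy ag br C P pol) {A : Finset X}
    (hA : ∀ z, ¬ Proposable ag br C P A z) : ∀ m, cop pol m A = A := by
  intro m
  cases m with
  | zero => rfl
  | succ m =>
    have hnone : pol A = none := by
      cases h : pol A with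
      | none => rfl
      | some x => exact absurd ((hv A).1 x h) (hA x)
    exact cop_succ_none hnone

lemma measure_insert {A : Finset X} {x : X} (hx : x ∉ A) :
    ((univ : Finset X) \ insert x A).card + 1 = ((univ : Finset X) \ A).card := by
  have he : (univ : Finset X) \ insert x A = ((univ : Finset X) \ A).erase x := by
    ext a
    simp only [Finset.mem_sdiff, Finset.mem_erase, Finset.mem_insert, Finset.mem_univ,
      true_and]
    tauto
  rw [he]
  exact Finset.card_erase_add_one (Finset.mem_sdiff.mpr ⟨Finset.mem_univ x, hx⟩)

/-- With enough fuel, the process reaches a terminal set. -/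
lemma cop_terminal {ag : X → I} {br : X → B} {C : B → Finset X → Finset X}
    {P : I → Option X → ℕ} {pol : Finset X → Option X}
    (hv : ValidPolicy ag br C P pol) :
    ∀ n (A : Finset X), ((univ : Finset X) \ A).card < n →
      ∀ z, ¬ Proposable ag br C P (cop pol n A) z := by
  intro n
  induction n with
  | zero => intro A h; omega
  | succ n ih =>
    intro A h z
    cases hp : pol A with
    | none => rw [cop_succ_none hp]; exact (hv A).2 hp z
    | some x =>
      rw [cop_succ_some hp]
      have hx : x ∉ A := ((hv A).1 x hp).1
      have hm := measure_insert (A := A) (x := x) hx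
      exact ih (insert x A) (by omega) z

/-- Confluence: any two terminal runs from the same start coincide. -/
lemma cop_confluent {ag : X → I} {br : X → B} {C : B → Finset X → Finset X}
    {P : I → Option X → ℕ} (hsub : ∀ b, Substb (C b))
    (hP : ∀ i, Function.Injective (P i)) :
    ∀ k (pol pol' : Finset X → Option X), ValidPolicy ag br C P pol →
      ValidPolicy ag br C P pol' → ∀ A : Finset X,
      ((univ : Finset X) \ A).card ≤ k → ∀ n m,
      (∀ z, ¬ Proposable ag br C P (cop pol n A) z) →
      (∀ z, ¬ Proposable ag br C P (cop pol' m A) z) →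
      cop pol n A = cop pol' m A := by
  intro k
  induction k with
  | zero =>
    intro pol pol' hv hv' A hk n m _ _
    have hA : ∀ z, ¬ Proposable ag br C P A z := by
      intro z hz
      have hzA : z ∉ A := hz.1
      have : ((univ : Finset X) \ A).card = 0 := Nat.le_zero.mp hk
      have := Finset.card_eq_zero.mp this
      have : z ∈ (univ : Finset X) \ A := Finset.mem_sdiff.mpr ⟨Finset.mem_univ z, hzA⟩
      simp_all
    rw [cop_stay hv hA n, cop_stay hv' hA m]
  | succ k ih =>
    intro pol pol' hv hv' A hk n m hn hm
    by_cases hnp : ∀ z, ¬ Proposable ag br C P A z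
    · rw [cop_stay hv hnp n, cop_stay hv' hnp m]
    · push_neg at hnp
      obtain ⟨w, hw⟩ := hnp
      cases n with
      | zero => exact absurd hw (hn w)
      | succ n =>
        cases m with
        | zero => exact absurd hw (hm w)
        | succ m =>
          obtain ⟨x, hx⟩ : ∃ x, pol A = some x := by
            cases h : pol A with
            | none => exact absurd hw ((hv A).2 h w)
            | some x => exact ⟨x, rfl⟩
          obtain ⟨y, hy⟩ : ∃ y, pol' A = some y := by
            cases h : pol' A with
            | none => exact absurd hw ((hv' A).2 h w)
            | some y => exact ⟨y, rfl⟩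
          have hpx : Proposable ag br C P A x := (hv A).1 x hx
          have hpy : Proposable ag br C P A y := (hv' A).1 y hy
          rw [cop_succ_some hx] at hn ⊢
          rw [cop_succ_some hy] at hm ⊢
          have hmx := measure_insert (A := A) hpx.1
          have hmy := measure_insert (A := A) hpy.1
          by_cases hxy : x = y
          · subst hxy
            exact ih pol pol' hv hv' (insert x A) (by omega) n m hn hm
          · -- the commuting square
            have hpy' : Proposable ag br C P (insert x A) y := prop_step hsub hP hpx hpy hxy
            have hpx' : Proposable ag br C P (insert y A) x :=
              prop_step hsub hP hpy hpx (Ne.symm hxy)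
            set N := Fintype.card X + 1 with hN
            have hcard : ∀ S : Finset X, ((univ : Finset X) \ S).card < N := by
              intro S
              have := Finset.card_le_univ ((univ : Finset X) \ S)
              omega
            set poly : Finset X → Option X :=
              fun S => if S = insert x A then some y else pol' S with hpoly
            set polx : Finset X → Option X :=
              fun S => if S = insert y A then some x else pol S with hpolx
            have hvy : ValidPolicy ag br C P poly := by
              intro S
              constructor
              · intro z hz
                by_cases h : S = insert x A
                · rw [hpoly] at hz; simp only [h, if_pos rfl] at hz
                  cases hz; rw [h]; exact hpy'
                · rw [hpoly] at hz; simp only [if_neg h] at hz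
                  exact (hv' S).1 z hz
              · intro h0 z
                by_cases h : S = insert x A
                · rw [hpoly] at h0; simp [h] at h0
                · rw [hpoly] at h0; simp only [if_neg h] at h0
                  exact (hv' S).2 h0 z
            have hvx : ValidPolicy ag br C P polx := by
              intro S
              constructor
              · intro z hz
                by_cases h : S = insert y A
                · rw [hpolx] at hz; simp only [h, if_pos rfl] at hz
                  cases hz; rw [h]; exact hpx'
                · rw [hpolx] at hz; simp only [if_neg h] at hz
                  exact (hv S).1 z hz
              · intro h0 z
                by_cases h : S = insert y A
                · rw [hpolx] at h0; simp [h] at h0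
                · rw [hpolx] at h0; simp only [if_neg h] at h0
                  exact (hv S).2 h0 z
            have hyval : poly (insert x A) = some y := by rw [hpoly]; simp
            have hxval : polx (insert y A) = some x := by rw [hpolx]; simp
            have hD : insert y (insert x A) = insert x (insert y A) :=
              by ext a; simp only [Finset.mem_insert]; tauto
            have e1 : cop pol n (insert x A) = cop poly (N + 1) (insert x A) :=
              ih pol poly hv hvy (insert x A) (by omega) n (N + 1) hn
                (cop_terminal hvy (N + 1) (insert x A) (by have := hcard (insert x A); omega))
            have e2 : cop poly (N + 1) (insert x A) = cop poly N (insert y (insert x A)) :=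
              cop_succ_some hyval
            have e3 : cop pol' m (insert y A) = cop polx (N + 1) (insert y A) :=
              ih pol' polx hv' hvx (insert y A) (by omega) m (N + 1) hm
                (cop_terminal hvx (N + 1) (insert y A) (by have := hcard (insert y A); omega))
            have e4 : cop polx (N + 1) (insert y A) = cop polx N (insert x (insert y A)) :=
              cop_succ_some hxval
            have hkD : ((univ : Finset X) \ insert y (insert x A)).card ≤ k := by
              have hsubD : (univ : Finset X) \ insert y (insert x A) ⊆
                  (univ : Finset X) \ insert x A :=
                Finset.sdiff_subset_sdiff (le_refl _)
                  (Finset.subset_insert y (insert x A))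
              have := Finset.card_le_card hsubD
              omega
            have e5 : cop poly N (insert y (insert x A)) =
                cop polx N (insert y (insert x A)) :=
              ih poly polx hvy hvx (insert y (insert x A)) hkD N N
                (cop_terminal hvy N _ (hcard _))
                (cop_terminal hvx N _ (hcard _))
            calc cop pol n (insert x A)
                = cop poly N (insert y (insert x A)) := e1.trans e2
              _ = cop polx N (insert y (insert x A)) := e5
              _ = cop polx N (insert x (insert y A)) := by rw [hD]
              _ = cop pol' m (insert y A) := (e3.trans e4).symm

/-- Order independence of the cumulative offer process: with IRC and substitutable
branch choice rules, any two valid proposal orders yield the same outcome. -/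
theorem cop_order_independent (ag : X → I) (br : X → B) (C : B → Finset X → Finset X)
    (P : I → Option X → ℕ)
    (hCb : ∀ b Y, C b Y ⊆ Y.filter (fun x => br x = b))
    (hfeas : ∀ b Y, ∀ x ∈ C b Y, ∀ y ∈ C b Y, ag x = ag y → x = y)
    (hirc : ∀ b, IRCb (C b)) (hsub : ∀ b, Substb (C b))
    (hP : ∀ i, Function.Injective (P i))
    (pol₁ pol₂ : Finset X → Option X)
    (h₁ : ValidPolicy ag br C P pol₁) (h₂ : ValidPolicy ag br C P pol₂) :
    outcome br C pol₁ = outcome br C pol₂ := by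
  unfold outcome
  congr 1
  have hc : ((univ : Finset X) \ (∅ : Finset X)).card < Fintype.card X + 1 := by
    have := Finset.card_le_univ ((univ : Finset X) \ (∅ : Finset X))
    omega
  exact cop_confluent hsub hP (Fintype.card X) pol₁ pol₂ h₁ h₂ ∅
    (by simpa using le_of_lt hc) (Fintype.card X + 1) (Fintype.card X + 1)
    (cop_terminal h₁ _ _ hc) (cop_terminal h₂ _ _ hc)
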